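/- Let α_1 ⊊ α_2 ⊊ … ⊊ α_N be a nested family of subsets of {1,…,n} with |α_t| = k_t, and fix a row index i ∈ {1,…,n}. Then the number of vectors v ∈ {−1,0,1}^n satisfying (a) there exists j ∈ α_1 with v_j = (s_{α_1})_i, and (b) for every t ∈ {2,…,N} such that i ∈ α_t \ α_{t−1}, there exists j ∈ α_t with v_j = 1, equals 3^n · (1 − (2/3)^{k_1} − Σ_{t=2}^{N} (1 − 2^{−k_1}) · (2/3)^{k_t} · [i ∈ α_t \ α_{t−1}]), where [·] is 1 if the condition holds and 0 otherwise. -/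

import Mathlib

open Finset

lemma countPi {n : ℕ} (S : Fin n → Finset SignType) :
    (univ.filter fun v : Fin n → SignType => ∀ j, v j ∈ S j).card = ∏ j, (S j).card := by
  rw [← Fintype.card_piFinset]
  congr 1
  ext v
  simp [Fintype.mem_piFinset]

lemma countAvoid {n : ℕ} (B : Finset (Fin n)) (s : SignType) :
    (univ.filter fun v : Fin n → SignType => ∀ j ∈ B, v j ≠ s).card
      = 2 ^ B.card * 3 ^ (n - B.card) := by
  have h1 : (univ.filter fun v : Fin n → SignType => ∀ j ∈ B, v j ≠ s)
      = univ.filter fun v => ∀ j, v j ∈ (if j ∈ B then ({s}ᶜ : Finset SignType) else univ) := by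
    apply filter_congr
    intro v _
    constructor
    · intro h j; split <;> simp_all
    · intro h j hj; have := h j; simp only [hj, if_true, mem_compl, mem_singleton] at this
      exact this
  rw [h1, countPi]
  have hcard : ∀ j : Fin n, ((if j ∈ B then ({s}ᶜ : Finset SignType) else univ)).card
      = if j ∈ B then 2 else 3 := by
    intro j; split
    · rw [card_compl, card_singleton]; decide
    · decide
  simp only [hcard]
  rw [Finset.prod_ite, Finset.prod_const, Finset.prod_const]
  congr 1
  · congr 1; rw [Finset.filter_mem_eq_inter, univ_inter]
  · congr 1
    rw [Finset.filter_not, Finset.filter_mem_eq_inter, univ_inter, card_sdiff_of_subset (subset_univ B),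
      card_univ, Fintype.card_fin]

lemma countAvoid2 {n : ℕ} (B C : Finset (Fin n)) (hBC : B ⊆ C) :
    (univ.filter fun v : Fin n → SignType =>
        (∀ j ∈ B, v j ≠ -1) ∧ (∀ j ∈ C, v j ≠ 1)).card
      = 2 ^ (C.card - B.card) * 3 ^ (n - C.card) := by
  have h1 : (univ.filter fun v : Fin n → SignType =>
        (∀ j ∈ B, v j ≠ -1) ∧ (∀ j ∈ C, v j ≠ 1))
      = univ.filter fun v => ∀ j, v j ∈
          (if j ∈ B then ({0} : Finset SignType) else if j ∈ C then {-1, 0} else univ) := by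
    apply filter_congr
    intro v _
    constructor
    · rintro ⟨hb, hc⟩ j
      by_cases hjB : j ∈ B
      · simp only [hjB, if_true, mem_singleton]
        have h1 := hb j hjB
        have h2 := hc j (hBC hjB)
        generalize v j = s at h1 h2 ⊢
        rcases s <;> simp_all
      · by_cases hjC : j ∈ C
        · simp only [hjB, if_false, hjC, if_true, mem_insert, mem_singleton]
          have h2 := hc j hjC
          generalize v j = s at h2 ⊢
          rcases s <;> simp_all
        · simp [hjB, hjC]
    · intro h
      constructor
      · intro j hj
        have := h j
        simp only [hj, if_true, mem_singleton] at this
        simp [this]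
      · intro j hj
        have := h j
        by_cases hjB : j ∈ B
        · simp only [hjB, if_true, mem_singleton] at this
          simp [this]
        · simp only [hjB, if_false, hj, if_true, mem_insert, mem_singleton] at this
          rcases this with h' | h' <;> simp [h']
  rw [h1, countPi]
  have hcard : ∀ j : Fin n,
      ((if j ∈ B then ({0} : Finset SignType) else if j ∈ C then {-1, 0} else univ)).card
      = if j ∈ B then 1 else if j ∈ C then 2 else 3 := by
    intro j
    by_cases hjB : j ∈ B
    · simp [hjB]
    · by_cases hjC : j ∈ C <;> simp [hjB, hjC] <;> decide
  simp only [hcard]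
  have h : ∀ x : Fin n, ((if x ∈ B then 1 else if x ∈ C then 2 else 3) : ℕ)
      = if x ∈ C then (if x ∈ B then 1 else 2) else 3 := by
    intro x
    by_cases hb : x ∈ B
    · simp [hb, hBC hb]
    · simp [hb]
  simp only [h]
  rw [Finset.prod_ite, Finset.prod_const, Finset.filter_mem_eq_inter,
    univ_inter, Finset.filter_not, Finset.filter_mem_eq_inter, univ_inter,
    card_sdiff_of_subset (subset_univ C), card_univ, Fintype.card_fin]
  congr 1
  rw [Finset.prod_ite, Finset.prod_const, Finset.prod_const, one_pow, one_mul,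
    Finset.filter_not, Finset.filter_mem_eq_inter, inter_comm, (inter_eq_left).2 hBC,
    card_sdiff_of_subset hBC]

lemma realid1 (a d e : ℕ) :
    (3:ℝ)^(a+d+e) - 2^a*3^(d+e) - 2^(a+d)*3^e + 2^d*3^e
      = 3^(a+d+e)*(1 - ((2:ℝ)/3)^a - (1-((2:ℝ)^a)⁻¹)*((2:ℝ)/3)^(a+d)) := by
  rw [div_pow, div_pow]
  have h3 : (3:ℝ)^a ≠ 0 := by positivity
  have h3' : (3:ℝ)^(a+d) ≠ 0 := by positivity
  have h2 : (2:ℝ)^a ≠ 0 := by positivity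
  field_simp
  ring

lemma realid2 (a e : ℕ) :
    (3:ℝ)^(a+e) - 2^a*3^e = 3^(a+e)*(1 - ((2:ℝ)/3)^a - 0) := by
  rw [div_pow]
  have h3 : (3:ℝ)^a ≠ 0 := by positivity
  field_simp
  ring

lemma card_univ_fun (n : ℕ) : (univ : Finset (Fin n → SignType)).card = 3 ^ n := by
  rw [card_univ, Fintype.card_fun, Fintype.card_fin,
    show Fintype.card SignType = 3 from rfl]

theorem stmt8 (n N : ℕ) (A : Fin (N + 1) → Finset (Fin n)) (hA : StrictMono A)
    (i : Fin n) :
    (((Finset.univ : Finset (Fin n → SignType)).filter fun v =>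
        (∃ j ∈ A 0, v j = (if i ∈ A 0 then (1 : SignType) else -1)) ∧
        ∀ t : Fin N, i ∈ A t.succ \ A t.castSucc → ∃ j ∈ A t.succ, v j = 1).card : ℝ)
      = 3 ^ n * (1 - ((2 : ℝ) / 3) ^ (A 0).card -
          ∑ t : Fin N,
            (if i ∈ A t.succ \ A t.castSucc then
              (1 - ((2 : ℝ) ^ (A 0).card)⁻¹) * ((2 : ℝ) / 3) ^ (A t.succ).card
            else 0)) := by
  have hk0n : (A 0).card ≤ n := by
    simpa using card_le_card (subset_univ (A 0))
  by_cases hex : ∃ t : Fin N, i ∈ A t.succ \ A t.castSucc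
  · obtain ⟨t0, ht0⟩ := hex
    have huniq : ∀ t : Fin N, i ∈ A t.succ \ A t.castSucc → t = t0 := by
      intro t ht
      by_contra hne
      rcases lt_or_gt_of_ne hne with h | h
      · have hsub : A t.succ ⊆ A t0.castSucc := by
          apply hA.monotone
          simp only [Fin.le_def, Fin.val_succ, Fin.coe_castSucc]
          omega
        exact (mem_sdiff.1 ht0).2 (hsub (mem_sdiff.1 ht).1)
      · have hsub : A t0.succ ⊆ A t.castSucc := by
          apply hA.monotone
          simp only [Fin.le_def, Fin.val_succ, Fin.coe_castSucc]
          omega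
        exact (mem_sdiff.1 ht).2 (hsub (mem_sdiff.1 ht0).1)
    have hiA0 : i ∉ A 0 := by
      intro hi
      exact (mem_sdiff.1 ht0).2 (hA.monotone (Fin.zero_le _) hi)
    have hBC : A 0 ⊆ A t0.succ := hA.monotone (Fin.zero_le _)
    have hBClt : (A 0).card < (A t0.succ).card := by
      have h1 : A 0 ⊆ A t0.castSucc := hA.monotone (Fin.zero_le _)
      have h2 : A t0.castSucc ⊂ A t0.succ := hA (Fin.castSucc_lt_succ : t0.castSucc < t0.succ)
      exact lt_of_le_of_lt (card_le_card h1) (card_lt_card h2)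
    have hkn : (A t0.succ).card ≤ n := by
      simpa using card_le_card (subset_univ (A t0.succ))
    -- simplify the sum to a single term
    have hsum : (∑ t : Fin N,
            (if i ∈ A t.succ \ A t.castSucc then
              (1 - ((2 : ℝ) ^ (A 0).card)⁻¹) * ((2 : ℝ) / 3) ^ (A t.succ).card
            else 0))
        = (1 - ((2 : ℝ) ^ (A 0).card)⁻¹) * ((2 : ℝ) / 3) ^ (A t0.succ).card := by
      rw [Finset.sum_eq_single_of_mem t0 (mem_univ _)]
      · rw [if_pos ht0]
      · intro t _ hne
        rw [if_neg (fun h => hne (huniq t h))]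
    rw [hsum]
    -- simplify the filter
    have hfilter : ((Finset.univ : Finset (Fin n → SignType)).filter fun v =>
        (∃ j ∈ A 0, v j = (if i ∈ A 0 then (1 : SignType) else -1)) ∧
        ∀ t : Fin N, i ∈ A t.succ \ A t.castSucc → ∃ j ∈ A t.succ, v j = 1)
        = (Finset.univ.filter fun v =>
            (∃ j ∈ A 0, v j = -1) ∧ (∃ j ∈ A t0.succ, v j = 1)) := by
      apply filter_congr
      intro v _
      rw [if_neg hiA0]
      constructor
      · rintro ⟨h1, h2⟩
        exact ⟨h1, h2 t0 ht0⟩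
      · rintro ⟨h1, h2⟩
        refine ⟨h1, fun t ht => ?_⟩
        rw [huniq t ht]
        exact h2
    rw [hfilter]
    -- inclusion-exclusion
    set P : (Fin n → SignType) → Prop := fun v => ∃ j ∈ A 0, v j = -1 with hP
    set Q : (Fin n → SignType) → Prop := fun v => ∃ j ∈ A t0.succ, v j = 1 with hQ
    have eq1 : (univ.filter fun v => P v ∧ Q v).card
        + (univ.filter fun v => ¬(P v ∧ Q v)).card = 3 ^ n := by
      rw [Finset.card_filter_add_card_filter_not, card_univ_fun]
    have hneg : (univ.filter fun v => ¬(P v ∧ Q v))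
        = (univ.filter fun v => ¬ P v) ∪ (univ.filter fun v => ¬ Q v) := by
      rw [← Finset.filter_or]
      apply filter_congr
      intro v _
      exact not_and_or
    have eq2 : ((univ.filter fun v => ¬ P v) ∪ (univ.filter fun v => ¬ Q v)).card
        + (univ.filter fun v => ¬ P v ∧ ¬ Q v).card
        = (univ.filter fun v => ¬ P v).card + (univ.filter fun v => ¬ Q v).card := by
      rw [Finset.filter_and]
      exact Finset.card_union_add_card_inter _ _
    have hcP : (univ.filter fun v => ¬ P v).card = 2 ^ (A 0).card * 3 ^ (n - (A 0).card) := by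
      rw [← countAvoid (A 0) (-1)]
      apply congrArg
      apply filter_congr
      intro v _
      simp [hP]
    have hcQ : (univ.filter fun v => ¬ Q v).card
        = 2 ^ (A t0.succ).card * 3 ^ (n - (A t0.succ).card) := by
      rw [← countAvoid (A t0.succ) 1]
      apply congrArg
      apply filter_congr
      intro v _
      simp [hQ]
    have hcPQ : (univ.filter fun v => ¬ P v ∧ ¬ Q v).card
        = 2 ^ ((A t0.succ).card - (A 0).card) * 3 ^ (n - (A t0.succ).card) := by
      rw [← countAvoid2 (A 0) (A t0.succ) hBC]
      apply congrArg
      apply filter_congr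
      intro v _
      simp [hP, hQ]
    -- transfer to ℝ
    obtain ⟨d, hd⟩ := Nat.exists_eq_add_of_le hBClt.le
    obtain ⟨e, he⟩ := Nat.exists_eq_add_of_le hkn
    have e1 : ((univ.filter fun v => P v ∧ Q v).card : ℝ)
        + ((univ.filter fun v => ¬(P v ∧ Q v)).card : ℝ) = 3 ^ n := by
      exact_mod_cast congrArg (Nat.cast : ℕ → ℝ) eq1
    rw [hneg] at e1
    have e2 : (((univ.filter fun v => ¬ P v) ∪ (univ.filter fun v => ¬ Q v)).card : ℝ)
        + ((univ.filter fun v => ¬ P v ∧ ¬ Q v).card : ℝ)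
        = ((univ.filter fun v => ¬ P v).card : ℝ)
        + ((univ.filter fun v => ¬ Q v).card : ℝ) := by
      exact_mod_cast congrArg (Nat.cast : ℕ → ℝ) eq2
    rw [hcP, hcQ, hcPQ] at e2
    have hgoal : ((univ.filter fun v => P v ∧ Q v).card : ℝ)
        = 3 ^ n - 2 ^ (A 0).card * 3 ^ (n - (A 0).card)
          - 2 ^ (A t0.succ).card * 3 ^ (n - (A t0.succ).card)
          + 2 ^ ((A t0.succ).card - (A 0).card) * 3 ^ (n - (A t0.succ).card) := by
      push_cast at e1 e2 ⊢
      linarith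
    rw [hgoal]
    -- final real arithmetic
    have hsub1 : (A t0.succ).card - (A 0).card = d := by omega
    have hsub2 : n - (A t0.succ).card = e := by omega
    have hsub3 : n - (A 0).card = d + e := by omega
    have hn : n = (A 0).card + d + e := by omega
    rw [hsub1, hsub2, hsub3, hd,
      show (3:ℝ)^n = 3^((A 0).card + d + e) from by rw [← hn]]
    exact realid1 (A 0).card d e
  · push_neg at hex
    have hsum : (∑ t : Fin N,
            (if i ∈ A t.succ \ A t.castSucc then
              (1 - ((2 : ℝ) ^ (A 0).card)⁻¹) * ((2 : ℝ) / 3) ^ (A t.succ).card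
            else 0)) = 0 := by
      apply Finset.sum_eq_zero
      intro t _
      rw [if_neg (hex t)]
    rw [hsum]
    have hfilter : ((Finset.univ : Finset (Fin n → SignType)).filter fun v =>
        (∃ j ∈ A 0, v j = (if i ∈ A 0 then (1 : SignType) else -1)) ∧
        ∀ t : Fin N, i ∈ A t.succ \ A t.castSucc → ∃ j ∈ A t.succ, v j = 1)
        = (Finset.univ.filter fun v =>
            ∃ j ∈ A 0, v j = (if i ∈ A 0 then (1 : SignType) else -1)) := by
      apply filter_congr
      intro v _
      constructor
      · exact fun h => h.1
      · exact fun h => ⟨h, fun t ht => absurd ht (hex t)⟩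
    rw [hfilter]
    set s : SignType := if i ∈ A 0 then 1 else -1 with hs
    have eq1 : (univ.filter fun v : Fin n → SignType => ∃ j ∈ A 0, v j = s).card
        + (univ.filter fun v : Fin n → SignType => ¬ ∃ j ∈ A 0, v j = s).card = 3 ^ n := by
      rw [Finset.card_filter_add_card_filter_not, card_univ_fun]
    have hc : (univ.filter fun v : Fin n → SignType => ¬ ∃ j ∈ A 0, v j = s).card
        = 2 ^ (A 0).card * 3 ^ (n - (A 0).card) := by
      rw [← countAvoid (A 0) s]
      apply congrArg
      apply filter_congr
      intro v _
      push_neg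
      rfl
    rw [hc] at eq1
    obtain ⟨e, he⟩ := Nat.exists_eq_add_of_le hk0n
    have hsub : n - (A 0).card = e := by
      clear hsum hfilter hs hc eq1 hex
      omega
    rw [hsub] at eq1
    have e1 : ((univ.filter fun v : Fin n → SignType => ∃ j ∈ A 0, v j = s).card : ℝ)
        + 2 ^ (A 0).card * 3 ^ e = 3 ^ n := by
      exact_mod_cast congrArg (Nat.cast : ℕ → ℝ) eq1
    have : ((univ.filter fun v : Fin n → SignType => ∃ j ∈ A 0, v j = s).card : ℝ)
        = 3 ^ n - 2 ^ (A 0).card * 3 ^ e := by linarith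
    rw [this, show (3:ℝ)^n = 3^((A 0).card + e) from by rw [← he]]
    exact realid2 (A 0).card e
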